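/- Open/closed portmanteau implies continuity sets: if for every open $U$, $\liminf_n V(X_n \in U) \ge V(X \in U)$ and $\liminf_n v(X_n \in U) \ge v(X \in U)$, then for every Borel set $A \subseteq \mathbb{R}$ with $V(X \in \partial A) = 0$, one has $V(X_n \in A) \to V(X \in A)$ and $v(X_n \in A) \to v(X \in A)$. -/

import Mathlib

open MeasureTheory Filter Set Topology ENNReal

/-- The upper capacity associated to a family of probability measures. -/
noncomputable def upperCap {Ω : Type*} [MeasurableSpace Ω]
    (Ps : Set (Measure Ω)) (A : Set Ω) : ℝ≥0∞ :=
  ⨆ P ∈ Ps, P A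

/-- The lower capacity associated to a family of probability measures. -/
noncomputable def lowerCap {Ω : Type*} [MeasurableSpace Ω]
    (Ps : Set (Measure Ω)) (A : Set Ω) : ℝ≥0∞ :=
  ⨅ P ∈ Ps, P A

lemma upperCap_le_one {Ω : Type*} [MeasurableSpace Ω] {Ps : Set (Measure Ω)}
    (hprob : ∀ P ∈ Ps, IsProbabilityMeasure P) (B : Set Ω) : upperCap Ps B ≤ 1 := by
  refine iSup₂_le fun P hP => ?_
  have := hprob P hP
  exact prob_le_one

lemma upperCap_mono {Ω : Type*} [MeasurableSpace Ω] {Ps : Set (Measure Ω)}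
    {B C : Set Ω} (h : B ⊆ C) : upperCap Ps B ≤ upperCap Ps C :=
  iSup₂_mono fun P _ => measure_mono h

lemma lowerCap_mono {Ω : Type*} [MeasurableSpace Ω] {Ps : Set (Measure Ω)}
    {B C : Set Ω} (h : B ⊆ C) : lowerCap Ps B ≤ lowerCap Ps C :=
  iInf₂_mono fun P _ => measure_mono h

lemma measure_compl_prob {Ω : Type*} [MeasurableSpace Ω] {P : Measure Ω}
    (hP : IsProbabilityMeasure P) {B : Set Ω} (hB : MeasurableSet B) :
    P Bᶜ = 1 - P B := by
  rw [measure_compl hB (measure_ne_top P B), measure_univ]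

lemma lowerCap_compl {Ω : Type*} [MeasurableSpace Ω] {Ps : Set (Measure Ω)}
    (hne : Ps.Nonempty) (hprob : ∀ P ∈ Ps, IsProbabilityMeasure P)
    {B : Set Ω} (hB : MeasurableSet B) :
    lowerCap Ps Bᶜ = 1 - upperCap Ps B := by
  have : Nonempty Ps := hne.to_subtype
  rw [lowerCap, upperCap, iInf_subtype', iSup_subtype',
    ENNReal.sub_iSup (by norm_num : (1 : ℝ≥0∞) ≠ ∞)]
  exact iInf_congr fun P => measure_compl_prob (hprob P P.2) hB

lemma upperCap_compl {Ω : Type*} [MeasurableSpace Ω] {Ps : Set (Measure Ω)}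
    (hprob : ∀ P ∈ Ps, IsProbabilityMeasure P)
    {B : Set Ω} (hB : MeasurableSet B) :
    upperCap Ps Bᶜ = 1 - lowerCap Ps B := by
  rw [upperCap, lowerCap, iInf_subtype', iSup_subtype', ENNReal.sub_iInf]
  exact iSup_congr fun P => measure_compl_prob (hprob P P.2) hB

theorem portmanteau_continuity_sets {Ω : Type*} [MeasurableSpace Ω]
    (Ps : Set (Measure Ω)) (hne : Ps.Nonempty)
    (hprob : ∀ P ∈ Ps, IsProbabilityMeasure P)
    (X : Ω → ℝ) (Xn : ℕ → Ω → ℝ) (hX : Measurable X) (hXn : ∀ n, Measurable (Xn n))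
    (hopen : ∀ U : Set ℝ, IsOpen U →
      upperCap Ps (X ⁻¹' U) ≤
        Filter.liminf (fun n => upperCap Ps (Xn n ⁻¹' U)) atTop ∧
      lowerCap Ps (X ⁻¹' U) ≤
        Filter.liminf (fun n => lowerCap Ps (Xn n ⁻¹' U)) atTop) :
    ∀ A : Set ℝ, MeasurableSet A → upperCap Ps (X ⁻¹' frontier A) = 0 →
      Tendsto (fun n => upperCap Ps (Xn n ⁻¹' A)) atTop (𝓝 (upperCap Ps (X ⁻¹' A))) ∧
      Tendsto (fun n => lowerCap Ps (Xn n ⁻¹' A)) atTop (𝓝 (lowerCap Ps (X ⁻¹' A))) := by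
  intro A hA hfr
  set U : Set ℝ := (closure A)ᶜ with hU
  have hUopen : IsOpen U := isClosed_closure.isOpen_compl
  have hclm : MeasurableSet (closure A) := isClosed_closure.measurableSet
  -- each measure kills the frontier
  have hPfr : ∀ P ∈ Ps, P (X ⁻¹' frontier A) = 0 := fun P hP =>
    le_antisymm (hfr ▸ le_iSup₂ (f := fun P (_ : P ∈ Ps) => P (X ⁻¹' frontier A)) P hP)
      zero_le
  -- each measure agrees on interior, A, closure
  have hPeq : ∀ P ∈ Ps, P (X ⁻¹' interior A) = P (X ⁻¹' A) ∧
      P (X ⁻¹' closure A) = P (X ⁻¹' A) := by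
    intro P hP
    have h1 : P (X ⁻¹' closure A) ≤ P (X ⁻¹' interior A) := by
      calc P (X ⁻¹' closure A) ≤ P (X ⁻¹' interior A ∪ X ⁻¹' frontier A) := by
            refine measure_mono fun x hx => ?_
            rcases (closure_eq_interior_union_frontier A ▸ hx : X x ∈ interior A ∪ frontier A)
              with h | h
            · exact Or.inl h
            · exact Or.inr h
        _ ≤ P (X ⁻¹' interior A) + P (X ⁻¹' frontier A) := measure_union_le _ _
        _ = P (X ⁻¹' interior A) := by rw [hPfr P hP, add_zero]
    have hiA : P (X ⁻¹' interior A) ≤ P (X ⁻¹' A) :=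
      measure_mono (preimage_mono interior_subset)
    have hAc : P (X ⁻¹' A) ≤ P (X ⁻¹' closure A) :=
      measure_mono (preimage_mono subset_closure)
    exact ⟨le_antisymm hiA (hAc.trans h1), le_antisymm (h1.trans hiA) hAc⟩
  -- upper/lower caps agree on interior, A, closure
  have hVi : upperCap Ps (X ⁻¹' interior A) = upperCap Ps (X ⁻¹' A) :=
    biSup_congr fun P hP => (hPeq P hP).1
  have hVc : upperCap Ps (X ⁻¹' closure A) = upperCap Ps (X ⁻¹' A) :=
    biSup_congr fun P hP => (hPeq P hP).2
  have hvi : lowerCap Ps (X ⁻¹' interior A) = lowerCap Ps (X ⁻¹' A) :=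
    biInf_congr fun P hP => (hPeq P hP).1
  have hvc : lowerCap Ps (X ⁻¹' closure A) = lowerCap Ps (X ⁻¹' A) :=
    biInf_congr fun P hP => (hPeq P hP).2
  have hUXn : ∀ n, Xn n ⁻¹' U = (Xn n ⁻¹' closure A)ᶜ := fun n => rfl
  have hUX : X ⁻¹' U = (X ⁻¹' closure A)ᶜ := rfl
  constructor
  · -- upper capacity
    refine tendsto_of_le_liminf_of_limsup_le ?_ ?_
    · calc upperCap Ps (X ⁻¹' A) = upperCap Ps (X ⁻¹' interior A) := hVi.symm
        _ ≤ liminf (fun n => upperCap Ps (Xn n ⁻¹' interior A)) atTop :=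
            (hopen _ isOpen_interior).1
        _ ≤ liminf (fun n => upperCap Ps (Xn n ⁻¹' A)) atTop :=
            liminf_le_liminf (Eventually.of_forall fun n =>
              upperCap_mono (preimage_mono interior_subset))
    · calc limsup (fun n => upperCap Ps (Xn n ⁻¹' A)) atTop
          ≤ limsup (fun n => upperCap Ps (Xn n ⁻¹' closure A)) atTop :=
            limsup_le_limsup (Eventually.of_forall fun n =>
              upperCap_mono (preimage_mono subset_closure))
        _ = limsup (fun n => 1 - lowerCap Ps (Xn n ⁻¹' U)) atTop := by
            refine limsup_congr (Eventually.of_forall fun n => ?_)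
            rw [hUXn n, lowerCap_compl hne hprob ((hXn n) hclm)]
            exact (ENNReal.sub_sub_cancel one_ne_top (upperCap_le_one hprob _)).symm
        _ = 1 - liminf (fun n => lowerCap Ps (Xn n ⁻¹' U)) atTop :=
            ENNReal.limsup_const_sub _ _ (by norm_num)
        _ ≤ 1 - lowerCap Ps (X ⁻¹' U) := tsub_le_tsub_left (hopen U hUopen).2 1
        _ = upperCap Ps (X ⁻¹' closure A) := by
            rw [hUX, lowerCap_compl hne hprob (hX hclm)]
            exact ENNReal.sub_sub_cancel one_ne_top (upperCap_le_one hprob _)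
        _ = upperCap Ps (X ⁻¹' A) := hVc
  · -- lower capacity
    refine tendsto_of_le_liminf_of_limsup_le ?_ ?_
    · calc lowerCap Ps (X ⁻¹' A) = lowerCap Ps (X ⁻¹' interior A) := hvi.symm
        _ ≤ liminf (fun n => lowerCap Ps (Xn n ⁻¹' interior A)) atTop :=
            (hopen _ isOpen_interior).2
        _ ≤ liminf (fun n => lowerCap Ps (Xn n ⁻¹' A)) atTop :=
            liminf_le_liminf (Eventually.of_forall fun n =>
              lowerCap_mono (preimage_mono interior_subset))
    · have hlowle : ∀ B : Set Ω, lowerCap Ps B ≤ 1 := by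
        intro B
        obtain ⟨P, hP⟩ := hne
        refine le_trans (iInf₂_le P hP) ?_
        have := hprob P hP
        exact prob_le_one
      calc limsup (fun n => lowerCap Ps (Xn n ⁻¹' A)) atTop
          ≤ limsup (fun n => lowerCap Ps (Xn n ⁻¹' closure A)) atTop :=
            limsup_le_limsup (Eventually.of_forall fun n =>
              lowerCap_mono (preimage_mono subset_closure))
        _ = limsup (fun n => 1 - upperCap Ps (Xn n ⁻¹' U)) atTop := by
            refine limsup_congr (Eventually.of_forall fun n => ?_)
            rw [hUXn n, upperCap_compl hprob ((hXn n) hclm)]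
            exact (ENNReal.sub_sub_cancel one_ne_top (hlowle _)).symm
        _ = 1 - liminf (fun n => upperCap Ps (Xn n ⁻¹' U)) atTop :=
            ENNReal.limsup_const_sub _ _ (by norm_num)
        _ ≤ 1 - upperCap Ps (X ⁻¹' U) := tsub_le_tsub_left (hopen U hUopen).1 1
        _ = lowerCap Ps (X ⁻¹' closure A) := by
            rw [hUX, upperCap_compl hprob (hX hclm)]
            exact ENNReal.sub_sub_cancel one_ne_top (hlowle _)
        _ = lowerCap Ps (X ⁻¹' A) := hvc
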